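/- Let g be a real Lie algebra admitting a basis (X, Y, Z) with brackets [X,Y] = 0, [Y,Z] = X, and [X,Z] = −Y. Then the Lie algebra ideals of g are exactly: the zero ideal, g itself, and the two-dimensional subspace spanned by X and Y. In particular, span{X,Y} is the unique nonzero proper Lie ideal of g. -/

import Mathlib

/-- If a real Lie algebra `g` has a basis `(X,Y,Z)` with `[X,Y] = 0`,
`[Y,Z] = X`, `[X,Z] = -Y`, then its Lie ideals are exactly `⊥`, `⊤`, and `span{X,Y}`;
in particular `span{X,Y}` is the unique nonzero proper Lie ideal. -/
theorem stmt4 {g : Type*} [LieRing g] [LieAlgebra ℝ g]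
    (b : Module.Basis (Fin 3) ℝ g)
    (hXY : ⁅b 0, b 1⁆ = 0) (hYZ : ⁅b 1, b 2⁆ = b 0) (hXZ : ⁅b 0, b 2⁆ = -(b 1)) :
    (∃ I : LieIdeal ℝ g, (I : Submodule ℝ g) = Submodule.span ℝ {b 0, b 1}) ∧
    (∀ I : LieIdeal ℝ g,
      (I : Submodule ℝ g) = ⊥ ∨ (I : Submodule ℝ g) = ⊤ ∨
        (I : Submodule ℝ g) = Submodule.span ℝ {b 0, b 1}) ∧
    Submodule.span ℝ ({b 0, b 1} : Set g) ≠ ⊥ ∧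
    Submodule.span ℝ ({b 0, b 1} : Set g) ≠ ⊤ := by
  have hYX : ⁅b 1, b 0⁆ = 0 := by rw [← lie_skew, hXY, neg_zero]
  have hZX : ⁅b 2, b 0⁆ = b 1 := by rw [← lie_skew, hXZ, neg_neg]
  have hZY : ⁅b 2, b 1⁆ = -(b 0) := by rw [← lie_skew, hYZ]
  set S : Submodule ℝ g := Submodule.span ℝ {b 0, b 1} with hS
  have hXS : b 0 ∈ S := Submodule.subset_span (by simp)
  have hYS : b 1 ∈ S := Submodule.subset_span (by simp)
  have hrep : ∀ v : g, (b.repr v 0) • b 0 + (b.repr v 1) • b 1 + (b.repr v 2) • b 2 = v := by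
    intro v
    have := b.sum_repr v
    rwa [Fin.sum_univ_three] at this
  -- bracket formulas
  have hlieX : ∀ x : g, ⁅x, b 0⁆ = (b.repr x 2) • b 1 := by
    intro x
    conv_lhs => rw [← hrep x]
    simp [hYX, hZX]
  have hlieY : ∀ x : g, ⁅x, b 1⁆ = -((b.repr x 2) • b 0) := by
    intro x
    conv_lhs => rw [← hrep x]
    simp [hXY, hZY]
  have hlieZ : ∀ x : g, ⁅x, b 2⁆ = (b.repr x 1) • b 0 - (b.repr x 0) • b 1 := by
    intro x
    conv_lhs => rw [← hrep x]
    simp only [add_lie, smul_lie, hXZ, hYZ, lie_self, smul_zero, add_zero, smul_neg]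
    abel
  -- S is a Lie ideal
  have hlieS : ∀ (x m : g), m ∈ S → ⁅x, m⁆ ∈ S := by
    intro x m hm
    obtain ⟨c, d, hcd⟩ := Submodule.mem_span_pair.mp hm
    rw [← hcd]
    have h1 : ⁅x, c • b 0 + d • b 1⁆ = c • ⁅x, b 0⁆ + d • ⁅x, b 1⁆ := by simp
    rw [h1, hlieX, hlieY]
    exact S.add_mem (S.smul_mem _ (S.smul_mem _ hYS))
      (S.smul_mem _ (S.neg_mem (S.smul_mem _ hXS)))
  refine ⟨⟨⟨S, fun {x m} hm => hlieS x m hm⟩, rfl⟩, ?_, ?_, ?_⟩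
  · intro I
    set J : Submodule ℝ g := (I : Submodule ℝ g) with hJ
    have hmemJ : ∀ x : g, x ∈ J ↔ x ∈ I := fun x => Iff.rfl
    have hlie : ∀ (x m : g), m ∈ J → ⁅x, m⁆ ∈ J := by
      intro x m hm
      exact (hmemJ _).mpr (I.lie_mem ((hmemJ m).mp hm))
    by_cases hbot : ∀ v ∈ J, v = (0 : g)
    · left
      exact (Submodule.eq_bot_iff _).mpr fun x hx => hbot x hx
    push_neg at hbot
    obtain ⟨v, hvJ, hv0⟩ := hbot
    by_cases hc : ∃ w ∈ J, b.repr w 2 ≠ 0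
    · right; left
      obtain ⟨w, hwJ, hw2⟩ := hc
      have e1 : ⁅b 0, w⁆ = -((b.repr w 2) • b 1) := by rw [← lie_skew, hlieX]
      have e2 : ⁅b 1, w⁆ = (b.repr w 2) • b 0 := by rw [← lie_skew, hlieY, neg_neg]
      have hYJ : b 1 ∈ J := by
        have h : (b.repr w 2)⁻¹ • (-⁅b 0, w⁆) ∈ J :=
          J.smul_mem _ (J.neg_mem (hlie _ _ hwJ))
        rwa [e1, neg_neg, inv_smul_smul₀ hw2] at h
      have hXJ : b 0 ∈ J := by
        have h : (b.repr w 2)⁻¹ • ⁅b 1, w⁆ ∈ J := J.smul_mem _ (hlie _ _ hwJ)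
        rwa [e2, inv_smul_smul₀ hw2] at h
      have hZJ : b 2 ∈ J := by
        set a1 := b.repr w 0 with ha1
        set a2 := b.repr w 1 with ha2
        set a3 := b.repr w 2 with ha3
        have hw' : a1 • b 0 + a2 • b 1 + a3 • b 2 = w := hrep w
        have h3 : w - a1 • b 0 - a2 • b 1 ∈ J :=
          J.sub_mem (J.sub_mem hwJ (J.smul_mem _ hXJ)) (J.smul_mem _ hYJ)
        have e : w - a1 • b 0 - a2 • b 1 = a3 • b 2 := by
          rw [← hw']
          abel
        rw [e] at h3
        have h4 := J.smul_mem a3⁻¹ h3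
        rwa [inv_smul_smul₀ hw2] at h4
      rw [Submodule.eq_top_iff']
      intro x
      rw [← hrep x]
      exact J.add_mem (J.add_mem (J.smul_mem _ hXJ) (J.smul_mem _ hYJ)) (J.smul_mem _ hZJ)
    · right; right
      push_neg at hc
      have hv2 : b.repr v 2 = 0 := hc v hvJ
      set p := b.repr v 0 with hp
      set q := b.repr v 1 with hq
      have hvXY : p • b 0 + q • b 1 = v := by
        have := hrep v
        rwa [hv2, zero_smul, add_zero] at this
      have hwv : ⁅b 2, v⁆ = p • b 1 - q • b 0 := by
        rw [← lie_skew, hlieZ, ← hp, ← hq]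
        abel
      have hwJ : p • b 1 - q • b 0 ∈ J := hwv ▸ hlie _ _ hvJ
      have hpq : p * p + q * q ≠ 0 := by
        intro h
        have hp0 : p = 0 := by nlinarith [mul_self_nonneg p, mul_self_nonneg q]
        have hq0 : q = 0 := by nlinarith [mul_self_nonneg p, mul_self_nonneg q]
        apply hv0
        rw [← hvXY, hp0, hq0, zero_smul, zero_smul, add_zero]
      have hXJ : b 0 ∈ J := by
        have h : p • v - q • (p • b 1 - q • b 0) ∈ J :=
          J.sub_mem (J.smul_mem _ hvJ) (J.smul_mem _ hwJ)
        have e : p • v - q • (p • b 1 - q • b 0) = (p * p + q * q) • b 0 := by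
          rw [← hvXY]
          module
        rw [e] at h
        have h2 := J.smul_mem (p * p + q * q)⁻¹ h
        rwa [inv_smul_smul₀ hpq] at h2
      have hYJ : b 1 ∈ J := by
        have h : q • v + p • (p • b 1 - q • b 0) ∈ J :=
          J.add_mem (J.smul_mem _ hvJ) (J.smul_mem _ hwJ)
        have e : q • v + p • (p • b 1 - q • b 0) = (p * p + q * q) • b 1 := by
          rw [← hvXY]
          module
        rw [e] at h
        have h2 := J.smul_mem (p * p + q * q)⁻¹ h
        rwa [inv_smul_smul₀ hpq] at h2
      apply le_antisymm
      · intro u huJ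
        have hu2 : b.repr u 2 = 0 := hc u huJ
        have : (b.repr u 0) • b 0 + (b.repr u 1) • b 1 = u := by
          have := hrep u
          rwa [hu2, zero_smul, add_zero] at this
        rw [← this]
        exact S.add_mem (S.smul_mem _ hXS) (S.smul_mem _ hYS)
      · rw [hS, Submodule.span_le]
        rintro x (rfl | hx)
        · exact hXJ
        · simp only [Set.mem_singleton_iff] at hx
          rw [hx]
          exact hYJ
  · intro h
    have : b 0 ∈ (⊥ : Submodule ℝ g) := h ▸ hXS
    simp only [Submodule.mem_bot] at this
    exact b.ne_zero 0 this
  · intro h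
    have hZ : b 2 ∈ S := h ▸ Submodule.mem_top
    obtain ⟨c, d, hcd⟩ := Submodule.mem_span_pair.mp hZ
    have h2 := congrArg (fun x => b.repr x 2) hcd
    simp [Finsupp.single_apply] at h2
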